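/- Let R be a ring and M an endoartinian right R-module. Then M satisfies the Schröder–Bernstein property: for any two direct summands A and B of M such that there exist an injective R-module homomorphism A → B and an injective R-module homomorphism B → A, the modules A and B are isomorphic as R-modules. -/

import Mathlib

/-- A module `M` over a ring `S` is *endoartinian* if every descending chain of images of
module endomorphisms of `M` stabilizes.  (A right `R`-module is treated as a module over
`Rᵐᵒᵖ`.) -/
def IsEndoartinian (S M : Type*) [Ring S] [AddCommGroup M] [Module S M] : Prop :=
  ∀ f : ℕ → M →ₗ[S] M,
    (∀ n, LinearMap.range (f (n + 1)) ≤ LinearMap.range (f n)) →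
    ∃ n, ∀ k, n ≤ k → LinearMap.range (f k) = LinearMap.range (f n)

/-- An endoartinian module satisfies the Schröder–Bernstein property: mutually
subisomorphic direct summands are isomorphic. -/
theorem isEndoartinian_SB_property (R M : Type*) [Ring R] [AddCommGroup M]
    [Module Rᵐᵒᵖ M] (hM : IsEndoartinian Rᵐᵒᵖ M) (A B : Submodule Rᵐᵒᵖ M)
    (hA : ∃ L : Submodule Rᵐᵒᵖ M, A ⊓ L = ⊥ ∧ A ⊔ L = ⊤)
    (hB : ∃ L : Submodule Rᵐᵒᵖ M, B ⊓ L = ⊥ ∧ B ⊔ L = ⊤)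
    (f : A →ₗ[Rᵐᵒᵖ] B) (hf : Function.Injective f)
    (g : B →ₗ[Rᵐᵒᵖ] A) (hg : Function.Injective g) :
    Nonempty (A ≃ₗ[Rᵐᵒᵖ] B) := by
  obtain ⟨L, hL1, hL2⟩ := hA
  have hcompl : IsCompl A L := ⟨disjoint_iff.mpr hL1, codisjoint_iff.mpr hL2⟩
  set π : M →ₗ[Rᵐᵒᵖ] A := A.projectionOnto L hcompl with hπ
  set h : A →ₗ[Rᵐᵒᵖ] A := g ∘ₗ f with hh
  have hinj : Function.Injective h := hg.comp hf
  set F : M →ₗ[Rᵐᵒᵖ] M := A.subtype ∘ₗ h ∘ₗ π with hF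
  have hπs : π ∘ₗ A.subtype = LinearMap.id := by
    ext a; simp [hπ, Submodule.projectionOnto_apply_left]
  have key : ∀ n : ℕ, (F ^ n) ∘ₗ A.subtype = A.subtype ∘ₗ (h ^ n) := by
    intro n
    induction n with
    | zero => rfl
    | succ n ih =>
      have h1 : F ^ (n + 1) = (F ^ n) ∘ₗ F := by
        rw [pow_succ]; rfl
      have h2 : h ^ (n + 1) = (h ^ n) ∘ₗ h := by
        rw [pow_succ]; rfl
      rw [h1, h2]
      calc ((F ^ n) ∘ₗ F) ∘ₗ A.subtype
          = (F ^ n) ∘ₗ A.subtype ∘ₗ h ∘ₗ (π ∘ₗ A.subtype) := by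
            simp only [hF, LinearMap.comp_assoc]
        _ = ((F ^ n) ∘ₗ A.subtype) ∘ₗ h := by
            rw [hπs]; simp only [LinearMap.comp_assoc, LinearMap.comp_id, LinearMap.id_comp]
        _ = (A.subtype ∘ₗ (h ^ n)) ∘ₗ h := by rw [ih]
        _ = A.subtype ∘ₗ (h ^ n) ∘ₗ h := by rw [LinearMap.comp_assoc]
  have keyF : ∀ n : ℕ, F ^ (n + 1) = A.subtype ∘ₗ (h ^ (n + 1)) ∘ₗ π := by
    intro n
    have h1 : F ^ (n + 1) = (F ^ n) ∘ₗ F := by rw [pow_succ]; rfl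
    have h2 : h ^ (n + 1) = (h ^ n) ∘ₗ h := by rw [pow_succ]; rfl
    calc F ^ (n + 1) = ((F ^ n) ∘ₗ A.subtype) ∘ₗ h ∘ₗ π := by rw [h1]; rfl
      _ = (A.subtype ∘ₗ (h ^ n)) ∘ₗ h ∘ₗ π := by rw [key n]
      _ = A.subtype ∘ₗ (h ^ (n + 1)) ∘ₗ π := by
          rw [h2]; simp only [LinearMap.comp_assoc]
  have hπsurj : Function.Surjective π := fun a => ⟨a, by simp [hπ, Submodule.projectionOnto_apply_left]⟩
  have rangeF : ∀ n : ℕ, LinearMap.range (F ^ (n + 1))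
      = (LinearMap.range (h ^ (n + 1))).map A.subtype := by
    intro n
    rw [keyF n, LinearMap.range_comp, LinearMap.range_comp,
      LinearMap.range_eq_top.mpr hπsurj, Submodule.map_top]
  obtain ⟨n, hn⟩ := hM (fun n => F ^ (n + 1)) (by
    intro n
    have : F ^ (n + 2) = (F ^ (n + 1)) ∘ₗ F := by rw [pow_succ]; rfl
    show LinearMap.range (F ^ (n + 2)) ≤ LinearMap.range (F ^ (n + 1))
    rw [this]
    exact LinearMap.range_comp_le_range _ _)
  have hstab : LinearMap.range (h ^ (n + 2)) = LinearMap.range (h ^ (n + 1)) := by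
    have := hn (n + 1) (Nat.le_succ n)
    rw [rangeF, rangeF] at this
    exact Submodule.map_injective_of_injective A.injective_subtype this
  have hpowinj : ∀ m : ℕ, Function.Injective (h ^ m) := by
    intro m
    rw [Module.End.coe_pow]
    exact Function.Injective.iterate hinj m
  have hsurj : Function.Surjective h := by
    intro a
    have : (h ^ (n + 1)) a ∈ LinearMap.range (h ^ (n + 2)) := by
      rw [hstab]; exact ⟨a, rfl⟩
    obtain ⟨b, hb⟩ := this
    have h2 : h ^ (n + 2) = (h ^ (n + 1)) ∘ₗ h := by rw [pow_succ]; rfl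
    rw [h2] at hb
    exact ⟨b, hpowinj (n + 1) hb⟩
  have hgsurj : Function.Surjective g := by
    intro a
    obtain ⟨b, hb⟩ := hsurj a
    exact ⟨f b, hb⟩
  exact ⟨(LinearEquiv.ofBijective g ⟨hg, hgsurj⟩).symm⟩
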